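/- For all real x ≥ 1, all positive integers q ≤ x, and every bijection γ of (ℤ/qℤ)^×, one has 0 ≤ T(x;q) − T_γ(x;q) ≤ 2 V(x;q). -/

import Mathlib

open ArithmeticFunction Finset
open scoped ArithmeticFunction.Moebius

/-- `Scount x q a` is the number of squarefree integers `n ≤ x` with `n ≡ a (mod q)`,
written as `∑_{n ≤ x, n ≡ a (q)} |μ(n)|`. -/
noncomputable def Scount (x : ℝ) (q : ℕ) (a : ZMod q) : ℝ :=
  ∑ n ∈ Finset.Icc 1 ⌊x⌋₊, if (n : ZMod q) = a then |((μ n : ℤ) : ℝ)| else 0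

/-- `cConst q = ∏_{p prime, p ∤ q} (1 - 1/p²)`. -/
noncomputable def cConst (q : ℕ) : ℝ :=
  ∏' p : {p : ℕ // p.Prime ∧ ¬ (p ∣ q)}, (1 - 1 / ((p : ℕ) : ℝ) ^ 2)

/-- The error term `E(x;q,a) = S(x;q,a) - c_q · x/q`. -/
noncomputable def Err (x : ℝ) (q : ℕ) (a : ZMod q) : ℝ :=
  Scount x q a - cConst q * x / q

/-- The variance `V(x;q) = ∑_{a ∈ (ℤ/qℤ)ˣ} E(x;q,a)²`. -/
noncomputable def Var (x : ℝ) (q : ℕ) : ℝ :=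
  ∑ a ∈ (Finset.range q).filter (fun a => Nat.Coprime a q), (Err x q (a : ZMod q)) ^ 2

/-- `Tcount x q = ∑_{n₁,n₂ ≤ x, gcd(n₁,q)=gcd(n₂,q)=1, n₁ ≡ n₂ (mod q)} |μ(n₁)| |μ(n₂)|`. -/
noncomputable def Tcount (x : ℝ) (q : ℕ) : ℝ :=
  ∑ n₁ ∈ Finset.Icc 1 ⌊x⌋₊, ∑ n₂ ∈ Finset.Icc 1 ⌊x⌋₊,
    if Nat.Coprime n₁ q ∧ Nat.Coprime n₂ q ∧ (n₁ : ZMod q) = (n₂ : ZMod q) then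
      |((μ n₁ : ℤ) : ℝ)| * |((μ n₂ : ℤ) : ℝ)| else 0

/-- `Qcount x q = ∑_{n ≤ x, gcd(n,q)=1} |μ(n)|`, the number of squarefree `n ≤ x`
coprime to `q`. -/
noncomputable def Qcount (x : ℝ) (q : ℕ) : ℝ :=
  ∑ n ∈ Finset.Icc 1 ⌊x⌋₊, if Nat.Coprime n q then |((μ n : ℤ) : ℝ)| else 0


/-- `Tgamma x q γ = ∑_{n₁,n₂ ≤ x, gcd(n₁,q)=gcd(n₂,q)=1, n₁ ≡ γ(n₂) (mod q)}
|μ(n₁)| |μ(n₂)|`, where `γ` is a map of `(ℤ/qℤ)ˣ`. -/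
noncomputable def Tgamma (x : ℝ) (q : ℕ) (γ : (ZMod q)ˣ → (ZMod q)ˣ) : ℝ :=
  ∑ n₁ ∈ Finset.Icc 1 ⌊x⌋₊, ∑ n₂ ∈ Finset.Icc 1 ⌊x⌋₊,
    if h : Nat.Coprime n₁ q ∧ Nat.Coprime n₂ q then
      (if (n₁ : ZMod q) = (γ (ZMod.unitOfCoprime n₂ h.2) : ZMod q) then
        |((μ n₁ : ℤ) : ℝ)| * |((μ n₂ : ℤ) : ℝ)| else 0)
    else 0

theorem stmt15 (x : ℝ) (q : ℕ) (hx : 1 ≤ x) (hq : 0 < q) (hqx : (q : ℝ) ≤ x)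
    (γ : (ZMod q)ˣ → (ZMod q)ˣ) (hγ : Function.Bijective γ) :
    0 ≤ Tcount x q - Tgamma x q γ ∧ Tcount x q - Tgamma x q γ ≤ 2 * Var x q := by
  classical
  haveI : NeZero q := ⟨hq.ne'⟩
  -- key pointwise sums over units
  have key1 : ∀ n₁ n₂ : ℕ, ∀ A B : ℝ,
      (∑ a : (ZMod q)ˣ, (if (n₁ : ZMod q) = (a : ZMod q) then A else 0) *
        (if (n₂ : ZMod q) = (a : ZMod q) then B else 0))
      = if Nat.Coprime n₁ q ∧ Nat.Coprime n₂ q ∧ (n₁ : ZMod q) = (n₂ : ZMod q)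
        then A * B else 0 := by
    intro n₁ n₂ A B
    by_cases h : Nat.Coprime n₁ q ∧ Nat.Coprime n₂ q ∧ (n₁ : ZMod q) = (n₂ : ZMod q)
    · obtain ⟨h₁, h₂, h₃⟩ := h
      rw [if_pos ⟨h₁, h₂, h₃⟩]
      rw [Fintype.sum_eq_single (ZMod.unitOfCoprime n₁ h₁)]
      · rw [ZMod.coe_unitOfCoprime, if_pos rfl, if_pos h₃.symm]
      · intro b hb
        have hne : ¬ ((n₁ : ZMod q) = (b : ZMod q)) := by
          intro hc
          exact hb (Units.ext (by rw [ZMod.coe_unitOfCoprime, hc])).symm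
        rw [if_neg hne, zero_mul]
    · rw [if_neg h]
      apply Finset.sum_eq_zero
      intro a _
      by_cases e1 : (n₁ : ZMod q) = (a : ZMod q)
      · by_cases e2 : (n₂ : ZMod q) = (a : ZMod q)
        · exact absurd ⟨(ZMod.isUnit_iff_coprime n₁ q).mp (by rw [e1]; exact a.isUnit),
            (ZMod.isUnit_iff_coprime n₂ q).mp (by rw [e2]; exact a.isUnit),
            e1.trans e2.symm⟩ h
        · rw [if_neg e2, mul_zero]
      · rw [if_neg e1, zero_mul]
  have key2 : ∀ n₁ n₂ : ℕ, ∀ A B : ℝ,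
      (∑ a : (ZMod q)ˣ, (if (n₁ : ZMod q) = ((γ a : (ZMod q)ˣ) : ZMod q) then A else 0) *
        (if (n₂ : ZMod q) = (a : ZMod q) then B else 0))
      = if h : Nat.Coprime n₁ q ∧ Nat.Coprime n₂ q then
          (if (n₁ : ZMod q) = ((γ (ZMod.unitOfCoprime n₂ h.2) : (ZMod q)ˣ) : ZMod q) then
            A * B else 0)
        else 0 := by
    intro n₁ n₂ A B
    by_cases h₂ : Nat.Coprime n₂ q
    · have hsum : (∑ a : (ZMod q)ˣ,
          (if (n₁ : ZMod q) = ((γ a : (ZMod q)ˣ) : ZMod q) then A else 0) *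
          (if (n₂ : ZMod q) = (a : ZMod q) then B else 0))
          = (if (n₁ : ZMod q) = ((γ (ZMod.unitOfCoprime n₂ h₂) : (ZMod q)ˣ) : ZMod q) then
              A else 0) * B := by
        rw [Fintype.sum_eq_single (ZMod.unitOfCoprime n₂ h₂)]
        · rw [ZMod.coe_unitOfCoprime, if_pos rfl]
        · intro b hb
          have hne : ¬ ((n₂ : ZMod q) = (b : ZMod q)) := by
            intro hc
            exact hb (Units.ext (by rw [ZMod.coe_unitOfCoprime, hc])).symm
          rw [if_neg hne, mul_zero]
      rw [hsum]
      by_cases hcond : (n₁ : ZMod q) = ((γ (ZMod.unitOfCoprime n₂ h₂) : (ZMod q)ˣ) : ZMod q)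
      · have h₁ : Nat.Coprime n₁ q := (ZMod.isUnit_iff_coprime n₁ q).mp
          (by rw [hcond]; exact (γ (ZMod.unitOfCoprime n₂ h₂)).isUnit)
        rw [dif_pos ⟨h₁, h₂⟩, if_pos hcond, if_pos hcond]
      · rw [if_neg hcond, zero_mul]
        by_cases h₁ : Nat.Coprime n₁ q
        · rw [dif_pos ⟨h₁, h₂⟩, if_neg hcond]
        · rw [dif_neg (fun hh => h₁ hh.1)]
    · rw [dif_neg (fun hh => h₂ hh.2)]
      apply Finset.sum_eq_zero
      intro a _
      have hne : ¬ ((n₂ : ZMod q) = (a : ZMod q)) := by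
        intro hc
        exact h₂ ((ZMod.isUnit_iff_coprime n₂ q).mp (by rw [hc]; exact a.isUnit))
      rw [if_neg hne, mul_zero]
  have h1 : Tcount x q = ∑ a : (ZMod q)ˣ, (Scount x q (a : ZMod q)) ^ 2 := by
    unfold Tcount Scount
    simp_rw [sq, Finset.sum_mul_sum]
    conv_rhs => rw [Finset.sum_comm]
    apply Finset.sum_congr rfl
    intro n₁ _
    conv_rhs => rw [Finset.sum_comm]
    apply Finset.sum_congr rfl
    intro n₂ _
    exact (key1 n₁ n₂ _ _).symm
  have h2 : Tgamma x q γ = ∑ a : (ZMod q)ˣ,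
      Scount x q ((γ a : (ZMod q)ˣ) : ZMod q) * Scount x q (a : ZMod q) := by
    unfold Tgamma Scount
    simp_rw [Finset.sum_mul_sum]
    conv_rhs => rw [Finset.sum_comm]
    apply Finset.sum_congr rfl
    intro n₁ _
    conv_rhs => rw [Finset.sum_comm]
    apply Finset.sum_congr rfl
    intro n₂ _
    exact (key2 n₁ n₂ _ _).symm
  have h3 : Var x q = ∑ a : (ZMod q)ˣ, (Err x q (a : ZMod q)) ^ 2 := by
    unfold Var
    refine Finset.sum_bij
      (fun a ha => ZMod.unitOfCoprime a (Finset.mem_filter.mp ha).2) ?_ ?_ ?_ ?_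
    · intro a ha; exact Finset.mem_univ _
    · intro a ha b hb hab
      have ha' := Finset.mem_filter.mp ha
      have hb' := Finset.mem_filter.mp hb
      have : ((a : ℕ) : ZMod q) = ((b : ℕ) : ZMod q) := by
        have := congrArg (fun u : (ZMod q)ˣ => (u : ZMod q)) hab
        simpa using this
      have hva := ZMod.val_cast_of_lt (Finset.mem_range.mp ha'.1)
      have hvb := ZMod.val_cast_of_lt (Finset.mem_range.mp hb'.1)
      rw [← hva, ← hvb, this]
    · intro u _
      refine ⟨(u : ZMod q).val, Finset.mem_filter.mpr
        ⟨Finset.mem_range.mpr (ZMod.val_lt _), ZMod.val_coe_unit_coprime u⟩, ?_⟩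
      apply Units.ext
      rw [ZMod.coe_unitOfCoprime, ZMod.natCast_rightInverse (u : ZMod q)]
    · intro a ha
      rw [ZMod.coe_unitOfCoprime]
  -- abbreviations
  set f : (ZMod q)ˣ → ℝ := fun a => Scount x q (a : ZMod q) with hfdef
  set e : (ZMod q)ˣ → ℝ := fun a => Err x q (a : ZMod q) with hedef
  have hfe : ∀ a : (ZMod q)ˣ, f a - f (γ a) = e a - e (γ a) := by
    intro a; simp only [hfdef, hedef, Err]; ring
  have hreidx : ∀ g : (ZMod q)ˣ → ℝ, (∑ a : (ZMod q)ˣ, g (γ a)) = ∑ a : (ZMod q)ˣ, g a :=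
    fun g => Fintype.sum_bijective γ hγ _ _ (fun a => rfl)
  have expand : (∑ a : (ZMod q)ˣ, (f a - f (γ a)) ^ 2)
      = (∑ a : (ZMod q)ˣ, f a ^ 2) + (∑ a : (ZMod q)ˣ, f (γ a) ^ 2)
        - 2 * ∑ a : (ZMod q)ˣ, f (γ a) * f a := by
    rw [Finset.mul_sum, ← Finset.sum_add_distrib, ← Finset.sum_sub_distrib]
    apply Finset.sum_congr rfl
    intro a _; ring
  have hsq : (∑ a : (ZMod q)ˣ, f (γ a) ^ 2) = ∑ a : (ZMod q)ˣ, f a ^ 2 :=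
    hreidx (fun a => f a ^ 2)
  have hdiff : 2 * (Tcount x q - Tgamma x q γ) = ∑ a : (ZMod q)ˣ, (e a - e (γ a)) ^ 2 := by
    have : (∑ a : (ZMod q)ˣ, (e a - e (γ a)) ^ 2)
        = ∑ a : (ZMod q)ˣ, (f a - f (γ a)) ^ 2 := by
      apply Finset.sum_congr rfl
      intro a _; rw [hfe]
    rw [this, expand, hsq, h1, h2]
    ring
  have hnn : (0 : ℝ) ≤ ∑ a : (ZMod q)ˣ, (e a - e (γ a)) ^ 2 :=
    Finset.sum_nonneg (fun a _ => sq_nonneg _)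
  have hub : (∑ a : (ZMod q)ˣ, (e a - e (γ a)) ^ 2)
      ≤ ∑ a : (ZMod q)ˣ, (2 * e a ^ 2 + 2 * e (γ a) ^ 2) := by
    apply Finset.sum_le_sum
    intro a _
    nlinarith [sq_nonneg (e a + e (γ a))]
  have hsplit : (∑ a : (ZMod q)ˣ, (2 * e a ^ 2 + 2 * e (γ a) ^ 2))
      = 4 * Var x q := by
    rw [Finset.sum_add_distrib, ← Finset.mul_sum, ← Finset.mul_sum,
      hreidx (fun a => e a ^ 2), h3]
    ring
  constructor
  · nlinarith
  · nlinarith
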